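/- Let W₁ and W₂ be m×m symmetric positive definite matrices with W₁ ≥ W₂. Then for every n×n symmetric positive semidefinite matrix X, g_{θ,W₁}(X) ≥ g_{θ,W₂}(X), i.e. the modified Riccati operator is monotone in the noise parameter W. (Proposition 1, item 5, first part.) -/

import Mathlib

open Matrix

lemma inv_sub_inv_psd {m : ℕ} {S₁ S₂ : Matrix (Fin m) (Fin m) ℝ} (h₁ : S₁.PosDef) (h₂ : S₂.PosDef)
    (h : (S₁ - S₂).PosSemidef) : (S₂⁻¹ - S₁⁻¹).PosSemidef := by
  have e1 : S₁⁻¹ * S₁ = 1 := nonsing_inv_mul _ h₁.det_pos.ne'.isUnit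
  have e2 : S₂⁻¹ * S₂ = 1 := nonsing_inv_mul _ h₂.det_pos.ne'.isUnit
  have e2' : S₂ * S₂⁻¹ = 1 := mul_nonsing_inv _ h₂.det_pos.ne'.isUnit
  have e1' : S₁ * S₁⁻¹ = 1 := mul_nonsing_inv _ h₁.det_pos.ne'.isUnit
  have hZ : S₂⁻¹ - S₁⁻¹ = (S₁⁻¹ - S₂⁻¹) * S₂ * (S₁⁻¹ - S₂⁻¹)ᴴ + S₁⁻¹ * (S₁ - S₂) * (S₁⁻¹)ᴴ := by
    have hs1 : (S₁⁻¹)ᴴ = S₁⁻¹ := h₁.isHermitian.inv.eq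
    have hs2 : (S₂⁻¹)ᴴ = S₂⁻¹ := h₂.isHermitian.inv.eq
    rw [conjTranspose_sub, hs1, hs2]
    noncomm_ring
    simp only [← mul_assoc, e2, e2', e1, e1', one_mul, mul_one]
    abel
  rw [hZ]
  exact ((h₂.posSemidef.mul_mul_conjTranspose_same _).add
    (h.mul_mul_conjTranspose_same _))

lemma psd_smul {k : ℕ} {M : Matrix (Fin k) (Fin k) ℝ} (hM : M.PosSemidef) {θ : ℝ} (hθ : 0 ≤ θ) :
    (θ • M).PosSemidef := by
  refine ⟨?_, fun x => ?_⟩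
  · unfold Matrix.IsHermitian
    rw [conjTranspose_smul, hM.isHermitian.eq]
    simp
  · have h := mul_nonneg hθ (hM.2 x)
    simp only [Finsupp.mul_sum, Matrix.smul_apply, smul_eq_mul] at h ⊢
    refine h.trans_eq ?_
    unfold Finsupp.sum
    refine Finset.sum_congr rfl fun i _ => Finset.sum_congr rfl fun j _ => ?_
    ring

/-- The modified Riccati operator
`g_{θ,W}(X) = A X Aᵀ + Q − θ A X Cᵀ (C X Cᵀ + W)⁻¹ C X Aᵀ`. -/
noncomputable def gRic {n m : ℕ} (A Q : Matrix (Fin n) (Fin n) ℝ)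
    (C : Matrix (Fin m) (Fin n) ℝ) (W : Matrix (Fin m) (Fin m) ℝ) (θ : ℝ)
    (X : Matrix (Fin n) (Fin n) ℝ) : Matrix (Fin n) (Fin n) ℝ :=
  A * X * Aᵀ + Q - θ • (A * X * Cᵀ * (C * X * Cᵀ + W)⁻¹ * (C * X * Aᵀ))

/-- Proposition 1, item 5, first part: monotonicity of the modified Riccati
operator in the noise parameter `W`. -/
theorem gRic_monotone_in_W {n m : ℕ} (A Q : Matrix (Fin n) (Fin n) ℝ)
    (C : Matrix (Fin m) (Fin n) ℝ) (W₁ W₂ : Matrix (Fin m) (Fin m) ℝ) (θ : ℝ)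
    (hQ : Q.PosSemidef) (hW₁ : W₁.PosDef) (hW₂ : W₂.PosDef)
    (hW12 : (W₁ - W₂).PosSemidef) (hθ : θ ∈ Set.Ioc (0 : ℝ) 1)
    (X : Matrix (Fin n) (Fin n) ℝ) (hX : X.PosSemidef) :
    (gRic A Q C W₁ θ X - gRic A Q C W₂ θ X).PosSemidef := by
  have hg : ∀ W : Matrix (Fin m) (Fin m) ℝ, gRic A Q C W θ X
      = A * X * Aᵀ + Q - θ • (A * X * Cᵀ * (C * X * Cᵀ + W)⁻¹ * (C * X * Aᵀ)) :=
    fun W => rfl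
  set M := A * X * Cᵀ with hM
  have hCXC : (C * X * Cᵀ).PosSemidef := by
    have := hX.mul_mul_conjTranspose_same C
    simpa [conjTranspose_eq_transpose_of_trivial] using this
  have hS₁ : (C * X * Cᵀ + W₁).PosDef := Matrix.PosDef.posSemidef_add hCXC hW₁
  have hS₂ : (C * X * Cᵀ + W₂).PosDef := Matrix.PosDef.posSemidef_add hCXC hW₂
  have hdiff : (C * X * Cᵀ + W₁) - (C * X * Cᵀ + W₂) = W₁ - W₂ := by abel
  have hinv : ((C * X * Cᵀ + W₂)⁻¹ - (C * X * Cᵀ + W₁)⁻¹).PosSemidef :=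
    inv_sub_inv_psd hS₁ hS₂ (hdiff ▸ hW12)
  have hXt : Xᵀ = X := by
    rw [← conjTranspose_eq_transpose_of_trivial]; exact hX.1
  have hN : C * X * Aᵀ = Mᴴ := by
    simp only [hM, conjTranspose_eq_transpose_of_trivial, transpose_mul, transpose_transpose,
      hXt, Matrix.mul_assoc]
  have key : gRic A Q C W₁ θ X - gRic A Q C W₂ θ X
      = θ • (M * ((C * X * Cᵀ + W₂)⁻¹ - (C * X * Cᵀ + W₁)⁻¹) * Mᴴ) := by
    rw [hg, hg, hN]
    rw [Matrix.mul_sub, Matrix.sub_mul, smul_sub]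
    abel
  rw [key]
  exact psd_smul (hinv.mul_mul_conjTranspose_same M) hθ.1.le
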